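/- Let r ∈ (0,1), ṙ ∈ ℝ with ṙ ≠ 0, θ ∈ ℝ with θ/π irrational, and θ̇ ∈ ℝ. Then the family of identities ṙ·(2rⁿ/sin(nθ) − r^{2n}·cot(nθ) − cot(nθ)) = −r·θ̇ + r^{2n}·θ̇ cannot hold for all n ≥ 1. -/
import Mathlib

open Filter Real Topology

/-- Irrational-angle case: the rearranged multiplier identities cannot all hold. -/
theorem stmt_12 (r rdot θ θdot : ℝ) (hr0 : 0 < r) (hr1 : r < 1) (hrdot : rdot ≠ 0)
    (hθ : Irrational (θ / Real.pi)) :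
    ¬ (∀ n : ℕ, 1 ≤ n →
      rdot * (2 * r ^ n / Real.sin (n * θ)
          - r ^ (2 * n) * (Real.cos (n * θ) / Real.sin (n * θ))
          - Real.cos (n * θ) / Real.sin (n * θ)) =
        - (r * θdot) + r ^ (2 * n) * θdot) := by
  intro H
  -- sin (n θ) ≠ 0 for n ≥ 1
  have hsin : ∀ n : ℕ, 1 ≤ n → Real.sin (n * θ) ≠ 0 := by
    intro n hn h
    rw [Real.sin_eq_zero_iff] at h
    obtain ⟨k, hk⟩ := h
    have hπ : (Real.pi : ℝ) ≠ 0 := Real.pi_ne_zero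
    have hn0 : (n : ℝ) ≠ 0 := Nat.cast_ne_zero.mpr (by omega)
    apply hθ
    refine ⟨(k : ℚ) / (n : ℚ), ?_⟩
    push_cast
    field_simp
    linarith [hk]
  -- key polynomial identity
  have key : ∀ n : ℕ, 1 ≤ n →
      rdot * Real.cos (n * θ) - r * θdot * Real.sin (n * θ) =
      2 * rdot * r ^ n - rdot * r ^ (2 * n) * Real.cos (n * θ)
        - r ^ (2 * n) * θdot * Real.sin (n * θ) := by
    intro n hn
    have h := H n hn
    have hs := hsin n hn
    field_simp at h
    linarith [h]
  set f : ℕ → ℝ := fun n => rdot * Real.cos (n * θ) - r * θdot * Real.sin (n * θ) with hfdef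
  have hr2 : r ^ 2 < 1 := by nlinarith
  have hrpow : Tendsto (fun n : ℕ => r ^ n) atTop (𝓝 0) :=
    tendsto_pow_atTop_nhds_zero_of_lt_one hr0.le hr1
  have hrpow2 : Tendsto (fun n : ℕ => (r ^ 2) ^ n) atTop (𝓝 0) :=
    tendsto_pow_atTop_nhds_zero_of_lt_one (by positivity) hr2
  -- f tends to 0
  have hf : Tendsto f atTop (𝓝 0) := by
    have h1 : Tendsto (fun n : ℕ => 2 * rdot * r ^ n) atTop (𝓝 0) := by
      simpa using hrpow.const_mul (2 * rdot)
    have h2 : Tendsto (fun n : ℕ => rdot * r ^ (2 * n) * Real.cos (n * θ)) atTop (𝓝 0) := by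
      refine squeeze_zero_norm (a := fun n : ℕ => |rdot| * (r ^ 2) ^ n) ?_ ?_
      · intro n
        rw [show r ^ (2 * n) = (r ^ 2) ^ n by rw [← pow_mul]]
        rw [Real.norm_eq_abs, abs_mul, abs_mul]
        have : |Real.cos (n * θ)| ≤ 1 := Real.abs_cos_le_one _
        have h0 : (0:ℝ) ≤ |rdot| * |(r ^ 2) ^ n| := by positivity
        calc |rdot| * |(r ^ 2) ^ n| * |Real.cos (n * θ)| ≤ |rdot| * |(r ^ 2) ^ n| * 1 := by
              apply mul_le_mul_of_nonneg_left this h0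
          _ = |rdot| * (r ^ 2) ^ n := by
              rw [mul_one, abs_of_nonneg (by positivity : (0:ℝ) ≤ (r^2)^n)]
      · simpa using hrpow2.const_mul |rdot|
    have h3 : Tendsto (fun n : ℕ => r ^ (2 * n) * θdot * Real.sin (n * θ)) atTop (𝓝 0) := by
      refine squeeze_zero_norm (a := fun n : ℕ => |θdot| * (r ^ 2) ^ n) ?_ ?_
      · intro n
        rw [show r ^ (2 * n) = (r ^ 2) ^ n by rw [← pow_mul]]
        rw [Real.norm_eq_abs, abs_mul, abs_mul]
        have : |Real.sin (n * θ)| ≤ 1 := Real.abs_sin_le_one _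
        have h0 : (0:ℝ) ≤ |(r ^ 2) ^ n| * |θdot| := by positivity
        calc |(r ^ 2) ^ n| * |θdot| * |Real.sin (n * θ)| ≤ |(r ^ 2) ^ n| * |θdot| * 1 := by
              apply mul_le_mul_of_nonneg_left this h0
          _ = |θdot| * (r ^ 2) ^ n := by
              rw [mul_one, abs_of_nonneg (by positivity : (0:ℝ) ≤ (r^2)^n), mul_comm]
      · simpa using hrpow2.const_mul |θdot|
    have hrhs : Tendsto (fun n : ℕ => 2 * rdot * r ^ n - rdot * r ^ (2 * n) * Real.cos (n * θ)
        - r ^ (2 * n) * θdot * Real.sin (n * θ)) atTop (𝓝 0) := by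
      simpa using (h1.sub h2).sub h3
    apply hrhs.congr'
    filter_upwards [eventually_ge_atTop 1] with n hn
    exact (key n hn).symm
  -- g
  set g : ℕ → ℝ := fun n => -(r * θdot) * Real.cos (n * θ) - rdot * Real.sin (n * θ) with hgdef
  have hrec : ∀ n : ℕ, f (n + 1) = f n * Real.cos θ + g n * Real.sin θ := by
    intro n
    simp only [hfdef, hgdef]
    push_cast
    rw [show ((n:ℝ) + 1) * θ = n * θ + θ by ring, Real.cos_add, Real.sin_add]
    ring
  have hsinθ : Real.sin θ ≠ 0 := by
    have := hsin 1 le_rfl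
    simpa using this
  have hgsin : Tendsto (fun n => g n * Real.sin θ) atTop (𝓝 0) := by
    have h1 : Tendsto (fun n => f (n + 1)) atTop (𝓝 0) :=
      hf.comp (tendsto_add_atTop_nat 1)
    have h2 : Tendsto (fun n => f n * Real.cos θ) atTop (𝓝 (0 * Real.cos θ)) :=
      hf.mul_const _
    have := h1.sub h2
    simp only [zero_mul, sub_zero] at this
    apply this.congr
    intro n
    rw [hrec n]; ring
  have hg : Tendsto g atTop (𝓝 0) := by
    have := hgsin.div_const (Real.sin θ)
    simp only [zero_div] at this
    apply this.congr
    intro n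
    field_simp
  -- f² + g² = const > 0
  have hconst : ∀ n : ℕ, f n ^ 2 + g n ^ 2 = rdot ^ 2 + (r * θdot) ^ 2 := by
    intro n
    have h := Real.sin_sq_add_cos_sq (n * θ)
    simp only [hfdef, hgdef]
    nlinarith [h]
  have hlim : Tendsto (fun n => f n ^ 2 + g n ^ 2) atTop (𝓝 0) := by
    have := (hf.mul hf).add (hg.mul hg)
    simp only [mul_zero, add_zero] at this
    apply this.congr
    intro n; ring
  have : rdot ^ 2 + (r * θdot) ^ 2 = 0 := by
    have hc : Tendsto (fun _ : ℕ => rdot ^ 2 + (r * θdot) ^ 2) atTop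
        (𝓝 (rdot ^ 2 + (r * θdot) ^ 2)) := tendsto_const_nhds
    exact tendsto_nhds_unique (hc.congr fun n => (hconst n).symm) hlim
  have : rdot ^ 2 > 0 := by positivity
  nlinarith [sq_nonneg (r * θdot)]
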